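/- Let d > 0 be a real number. The function H : ℝ → ℝ defined by H(x) = x·(log(4x/(e²·d)))² for 0 ≤ x ≤ d/4 (with H(0) = 0) and H(x) = d for x > d/4 is concave on [0, ∞). -/

import Mathlib

open Real Set Filter Topology

/-- The function `H` equal to `x · (log (4x / (e² d)))²` for `0 ≤ x ≤ d/4`
(with `H 0 = 0`, which holds with Lean's convention `log 0 = 0`) and equal to `d`
for `x > d/4` is concave on `[0, ∞)`. -/
theorem concaveOn_H (d : ℝ) (hd : 0 < d) :
    ConcaveOn ℝ (Set.Ici (0 : ℝ))
      (fun x : ℝ =>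
        if x ≤ d / 4 then x * Real.log (4 * x / (Real.exp 1 ^ 2 * d)) ^ 2 else d) := by
  have hE : (0:ℝ) < Real.exp 1 ^ 2 * d := by positivity
  set E : ℝ := Real.exp 1 ^ 2 * d with hEdef
  set C : ℝ := Real.log 4 - Real.log E with hC
  set H : ℝ → ℝ := fun x : ℝ =>
      if x ≤ d / 4 then x * Real.log (4 * x / E) ^ 2 else d with hH
  have hlogE : Real.log E = 2 + Real.log d := by
    rw [hEdef, Real.log_mul (by positivity) hd.ne', Real.log_pow, Real.log_exp]
    ring
  have hlog : ∀ x : ℝ, 0 < x → Real.log (4 * x / E) = Real.log x + C := by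
    intro x hx
    rw [hC, div_eq_mul_inv, Real.log_mul (by positivity) (by positivity),
      Real.log_mul (by norm_num) hx.ne', Real.log_inv]
    ring
  have hd4 : (0:ℝ) < d / 4 := by linarith
  have hu : ∀ x : ℝ, 0 < x → x ≤ d / 4 → Real.log x + C ≤ -2 := by
    intro x hx hxd
    have := Real.log_le_log hx hxd
    have hld4 : Real.log (d / 4) = Real.log d - Real.log 4 :=
      Real.log_div hd.ne' (by norm_num)
    rw [hld4] at this
    rw [hC, hlogE]; linarith
  set f : ℝ → ℝ := fun y => y * (Real.log y + C) ^ 2 with hf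
  set g : ℝ → ℝ := fun y => (Real.log y + C) ^ 2 + 2 * (Real.log y + C) with hg
  have hfd : ∀ x : ℝ, 0 < x → HasDerivAt f (g x) x := by
    intro x hx
    have h1 : HasDerivAt (fun y => (Real.log y + C)^2)
        (2 * (Real.log x + C) ^ 1 * x⁻¹) x :=
      ((Real.hasDerivAt_log hx.ne').add_const C).pow 2
    have h2 := (hasDerivAt_id x).mul h1
    have h3 : HasDerivAt f (1 * (Real.log x + C) ^ 2 + id x * (2 * (Real.log x + C) ^ 1 * x⁻¹)) x := h2
    convert h3 using 1
    simp only [hg, id]; field_simp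
  set f4 : ℝ → ℝ := fun y => y * Real.log (4 * y / E) ^ 2 with hf4
  have hf4eq : ∀ x : ℝ, 0 < x → f4 x = f x := by
    intro x hx; simp only [hf4, hf, hlog x hx]
  have hf4d : ∀ x : ℝ, 0 < x → HasDerivAt f4 (g x) x := by
    intro x hx
    refine (hfd x hx).congr_of_eventuallyEq ?_
    filter_upwards [isOpen_Ioi.mem_nhds (show x ∈ Ioi (0:ℝ) from hx)] with y hy
    exact hf4eq y hy
  have hHf4 : ∀ x : ℝ, x ≤ d / 4 → H x = f4 x := by
    intro x hx; simp only [hH, hf4, if_pos hx]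
  have hval : f4 (d / 4) = d := by
    have : (4 : ℝ) * (d / 4) / E = (Real.exp 1 ^ 2)⁻¹ := by
      rw [hEdef]; field_simp
    simp only [hf4, this, Real.log_inv, Real.log_pow, Real.log_exp]
    norm_num
  have hHd : ∀ x : ℝ, d / 4 ≤ x → H x = d := by
    intro x hx
    rcases eq_or_lt_of_le hx with h | h
    · rw [← h, hHf4 _ le_rfl, hval]
    · simp only [hH, if_neg (not_le.mpr h)]
  have hgd4 : g (d / 4) = 0 := by
    have : Real.log (d / 4) + C = -2 := by
      rw [Real.log_div hd.ne' (by norm_num), hC, hlogE]; ring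
    simp only [hg, this]; norm_num
  have hHderiv : ∀ x : ℝ, 0 < x →
      HasDerivAt H (if x < d / 4 then g x else 0) x := by
    intro x hx
    rcases lt_trichotomy x (d / 4) with h | h | h
    · rw [if_pos h]
      refine (hf4d x hx).congr_of_eventuallyEq ?_
      filter_upwards [isOpen_Iio.mem_nhds (show x ∈ Iio (d/4) from h)] with y hy
      exact hHf4 y hy.le
    · rw [if_neg (not_lt.mpr h.ge)]
      subst h
      have h1 : HasDerivWithinAt H 0 (Iic (d/4)) (d/4) := by
        have := (hf4d (d/4) hd4).hasDerivWithinAt (s := Iic (d/4))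
        rw [hgd4] at this
        exact this.congr (fun y hy => hHf4 y hy) (hHf4 _ le_rfl)
      have h2 : HasDerivWithinAt H 0 (Ici (d/4)) (d/4) := by
        have h0 : HasDerivWithinAt (fun _ : ℝ => d) 0 (Ici (d/4)) (d/4) :=
          (hasDerivAt_const _ d).hasDerivWithinAt
        exact h0.congr (fun y hy => hHd y hy) (hHd _ le_rfl)
      have h3 := h1.union h2
      rw [Iic_union_Ici] at h3
      exact h3.hasDerivAt univ_mem
    · rw [if_neg (not_lt.mpr h.le)]
      refine (hasDerivAt_const x d).congr_of_eventuallyEq ?_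
      filter_upwards [isOpen_Ioi.mem_nhds (show x ∈ Ioi (d/4) from h)] with y hy
      exact hHd y hy.le
  have hcont : ContinuousOn H (Ici 0) := by
    intro x hx
    rcases eq_or_lt_of_le (show (0:ℝ) ≤ x from hx) with h | h
    · subst h
      rw [← continuousWithinAt_Ioi_iff_Ici]
      have hH0 : H 0 = 0 := by
        simp [hH, hd4.le, Real.log_zero]
      rw [ContinuousWithinAt, hH0]
      have hFt : Tendsto (fun y : ℝ => (2 * (Real.sqrt y * Real.log (Real.sqrt y))
          + C * Real.sqrt y) ^ 2) (𝓝 0) (𝓝 0) := by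
        have hc : Continuous fun y : ℝ => (2 * (Real.sqrt y * Real.log (Real.sqrt y))
            + C * Real.sqrt y) ^ 2 := by
          exact ((continuous_const.mul (Real.continuous_mul_log.comp Real.continuous_sqrt)).add
            (continuous_const.mul Real.continuous_sqrt)).pow 2
        have := hc.tendsto 0
        simpa using this
      refine Tendsto.congr' ?_ (hFt.mono_left nhdsWithin_le_nhds)
      filter_upwards [Ioo_mem_nhdsGT_of_mem (show (0:ℝ) ∈ Ico 0 (d/4) from ⟨le_rfl, hd4⟩)]
        with y hy
      have hy0 : 0 < y := hy.1
      rw [hHf4 y hy.2.le, hf4eq y hy0]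
      have hs : Real.sqrt y ^ 2 = y := Real.sq_sqrt hy0.le
      rw [Real.log_sqrt hy0.le]
      simp only [hf]
      nlinarith [Real.sq_sqrt hy0.le, Real.sqrt_nonneg y]
    · exact ((hHderiv x h).differentiableAt.continuousAt).continuousWithinAt
  refine AntitoneOn.concaveOn_of_deriv (convex_Ici 0) hcont ?_ ?_
  · rw [interior_Ici]
    intro x hx
    exact ((hHderiv x hx).differentiableAt).differentiableWithinAt
  · rw [interior_Ici]
    intro x hx y hy hxy
    rw [(hHderiv x hx).deriv, (hHderiv y hy).deriv]
    have hlxy : Real.log x ≤ Real.log y := Real.log_le_log hx hxy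
    split_ifs with h1 h2 h2
    · -- y < d/4, x < d/4
      have hux := hu x hx h2.le
      have huy := hu y hy h1.le
      simp only [hg]
      nlinarith
    · -- y < d/4, ¬ x < d/4 : impossible
      exact absurd (lt_of_le_of_lt hxy h1) h2
    · -- ¬ y < d/4, x < d/4 : 0 ≤ g x
      have hux := hu x hx h2.le
      simp only [hg]
      nlinarith
    · exact le_rfl
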